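/- Let M be a rank-1 projective measurement assemblage in dimension d ≥ 1 with m settings (so o = d outcomes) whose measurements are mutually unbiased to the computational (incoherent) basis, i.e., (M x a) i i = 1/d for all i, a, x (diagonal entries all equal to 1/d). Then for any weighting p the coherence equals C⋄(M,p) = 1 − 1/d. -/

import Mathlib

open Matrix Kronecker BigOperators ComplexOrder

noncomputable section

def IsDensityMatrix {n : Type*} [Fintype n] [DecidableEq n] (ρ : Matrix n n ℂ) : Prop :=
  ρ.PosSemidef ∧ ρ.trace = 1

noncomputable def traceNorm {n : Type*} [Fintype n] [DecidableEq n] (X : Matrix n n ℂ) : ℝ :=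
  (((Matrix.posSemidef_conjTranspose_mul_self X).1.eigenvectorUnitary : Matrix n n ℂ) *
    Matrix.diagonal (((↑) : ℝ → ℂ) ∘ (Real.sqrt ∘ (Matrix.posSemidef_conjTranspose_mul_self X).1.eigenvalues)) *
    (star (Matrix.posSemidef_conjTranspose_mul_self X).1.eigenvectorUnitary : Matrix n n ℂ)).trace.re

noncomputable def specNorm {n : Type*} [Fintype n] [DecidableEq n] (X : Matrix n n ℂ) : ℝ :=
  ‖Matrix.toEuclideanCLM (𝕜 := ℂ) X‖

def ptrace1 {n e : Type*} [Fintype n] (ρ : Matrix (n × e) (n × e) ℂ) : Matrix e e ℂ :=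
  Matrix.of fun j j' => ∑ i, ρ (i, j) (i, j')

def IsAssemblage {d m o : ℕ} (M : Fin m → Fin o → Matrix (Fin d) (Fin d) ℂ) : Prop :=
  (∀ x a, (M x a).PosSemidef) ∧ ∀ x, ∑ a, M x a = 1

def IsWeighting {m : ℕ} (p : Fin m → ℝ) : Prop :=
  (∀ x, 0 < p x) ∧ ∑ x, p x = 1

noncomputable def Ddiamond {d m o : ℕ} (p : Fin m → ℝ)
    (M N : Fin m → Fin o → Matrix (Fin d) (Fin d) ℂ) : ℝ :=
  (1 / 2) * ∑ x, p x *
    ⨆ ρ : {ρ : Matrix (Fin d × Fin d) (Fin d × Fin d) ℂ // IsDensityMatrix ρ},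
      ∑ a, traceNorm (ptrace1 (((M x a - N x a) ⊗ₖ (1 : Matrix (Fin d) (Fin d) ℂ)) * ρ.1))

def JointlyMeasurable {d m o : ℕ} (F : Fin m → Fin o → Matrix (Fin d) (Fin d) ℂ) : Prop :=
  ∃ G : (Fin m → Fin o) → Matrix (Fin d) (Fin d) ℂ,
    (∀ lam, (G lam).PosSemidef) ∧ (∑ lam, G lam = 1) ∧
    ∀ x a, F x a = ∑ lam ∈ Finset.univ.filter (fun lam => lam x = a), G lam

noncomputable def Incomp {d m o : ℕ} (p : Fin m → ℝ)
    (M : Fin m → Fin o → Matrix (Fin d) (Fin d) ℂ) : ℝ :=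
  ⨅ F : {F : Fin m → Fin o → Matrix (Fin d) (Fin d) ℂ // IsAssemblage F ∧ JointlyMeasurable F},
    Ddiamond p M F.1


def IsRankOneProjective {d m : ℕ} (M : Fin m → Fin d → Matrix (Fin d) (Fin d) ℂ) : Prop :=
  ∀ x a, (M x a).IsHermitian ∧ M x a * M x a = M x a ∧ (M x a).trace = 1

def IsIncoherent {d m o : ℕ} (F : Fin m → Fin o → Matrix (Fin d) (Fin d) ℂ) : Prop :=
  ∀ x a, (F x a).IsDiag

noncomputable def Coherence {d m o : ℕ} (p : Fin m → ℝ)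
    (M : Fin m → Fin o → Matrix (Fin d) (Fin d) ℂ) : ℝ :=
  ⨅ F : {F : Fin m → Fin o → Matrix (Fin d) (Fin d) ℂ // IsAssemblage F ∧ IsIncoherent F},
    Ddiamond p M F.1

section Aux
set_option linter.unusedSectionVars false

variable {n : Type*} [Fintype n] [DecidableEq n]

open scoped MatrixOrder in
lemma traceNorm_eq_sqrt (X : Matrix n n ℂ) : traceNorm X = (CFC.sqrt (Xᴴ * X)).trace.re := by
  unfold traceNorm
  rw [CFC.sqrt_eq_real_sqrt _ (Matrix.posSemidef_conjTranspose_mul_self X).nonneg,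
    cfcₙ_eq_cfc, (Matrix.posSemidef_conjTranspose_mul_self X).1.cfc_eq, Matrix.IsHermitian.cfc,
    Unitary.conjStarAlgAut_apply]
  rfl

open scoped MatrixOrder in
lemma traceNorm_eq_of_sq {X S : Matrix n n ℂ} (hS : S.PosSemidef) (h : S ^ 2 = Xᴴ * X) :
    traceNorm X = S.trace.re := by
  rw [traceNorm_eq_sqrt, CFC.sqrt_unique (by rw [← pow_two, h]) hS.nonneg]

lemma PosSemidef.traceNorm_eq {X : Matrix n n ℂ} (hX : X.PosSemidef) :
    traceNorm X = X.trace.re :=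
  traceNorm_eq_of_sq hX (by rw [pow_two, hX.isHermitian.eq])

lemma diag_re_nonneg {X : Matrix n n ℂ} (hX : X.PosSemidef) (i : n) : 0 ≤ (X i i).re := by
  have := hX.re_dotProduct_nonneg (Pi.single i 1)
  simpa [dotProduct, Matrix.mulVec, Pi.single_apply, Finset.sum_ite_eq] using this

lemma re_trace_nonneg {X : Matrix n n ℂ} (hX : X.PosSemidef) : 0 ≤ X.trace.re := by
  rw [Matrix.trace, Complex.re_sum]
  exact Finset.sum_nonneg fun i _ => diag_re_nonneg hX i

open scoped MatrixOrder in
lemma traceNorm_nonneg (X : Matrix n n ℂ) : 0 ≤ traceNorm X := by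
  rw [traceNorm_eq_sqrt]
  exact re_trace_nonneg (Matrix.nonneg_iff_posSemidef.mp (CFC.sqrt_nonneg _))

lemma psd_smul {A : Matrix n n ℂ} (hA : A.PosSemidef) {r : ℝ} (hr : 0 ≤ r) :
    ((r : ℂ) • A).PosSemidef := by
  exact hA.smul (by exact_mod_cast Complex.zero_le_real.2 hr)

lemma traceNorm_real_smul {X : Matrix n n ℂ} (hX : X.PosSemidef) (r : ℝ) :
    traceNorm ((r : ℂ) • X) = |r| * X.trace.re := by
  have h : (((|r| : ℝ) : ℂ) • X) ^ 2 = ((r : ℂ) • X)ᴴ * ((r : ℂ) • X) := by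
    simp only [pow_two, Matrix.conjTranspose_smul, hX.1.eq, Matrix.smul_mul, Matrix.mul_smul,
      smul_smul]
    congr 1
    rw [← Complex.ofReal_mul, abs_mul_abs_self, Complex.star_def, Complex.conj_ofReal,
      ← Complex.ofReal_mul]
  rw [traceNorm_eq_of_sq (psd_smul hX (abs_nonneg r)) h, Matrix.trace_smul]
  simp [Complex.re_ofReal_mul]

lemma unitary_conj_mul {V : Matrix n n ℂ} (h1 : star V * V = 1) (f g : n → ℂ) :
    (V * Matrix.diagonal f * star V) * (V * Matrix.diagonal g * star V)
      = V * Matrix.diagonal (f * g) * star V := by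
  have hWV : ∀ X : Matrix n n ℂ, star V * (V * X) = X := fun X => by
    rw [← Matrix.mul_assoc, h1, Matrix.one_mul]
  simp only [Matrix.mul_assoc, hWV]
  rw [← Matrix.mul_assoc (Matrix.diagonal f), Matrix.diagonal_mul_diagonal]
  rfl

lemma traceNorm_sub_le {A B : Matrix n n ℂ} (hA : A.PosSemidef) (hB : B.PosSemidef) :
    traceNorm (A - B) ≤ A.trace.re + B.trace.re := by
  have hY : (A - B).IsHermitian := hA.1.sub hB.1
  set V : Matrix n n ℂ := (hY.eigenvectorUnitary : Matrix n n ℂ) with hV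
  have h1 : star V * V = 1 := (Matrix.mem_unitaryGroup_iff').mp hY.eigenvectorUnitary.2
  have h2 : V * star V = 1 := (Matrix.mem_unitaryGroup_iff).mp hY.eigenvectorUnitary.2
  set lam := hY.eigenvalues with hlam
  set S : Matrix n n ℂ := V * Matrix.diagonal (fun i => ((|lam i| : ℝ) : ℂ)) * star V with hS
  have hDpsd : (Matrix.diagonal (fun i => ((|lam i| : ℝ) : ℂ))).PosSemidef :=
    Matrix.posSemidef_diagonal_iff.mpr fun i => Complex.zero_le_real.2 (abs_nonneg _)
  have hSpsd : S.PosSemidef := by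
    have := hDpsd.mul_mul_conjTranspose_same V
    simpa [hS, Matrix.star_eq_conjTranspose, ← Matrix.mul_assoc] using this
  have hsq : S ^ 2 = (A - B)ᴴ * (A - B) := by
    rw [pow_two, hY.eq]
    conv_rhs => rw [hY.spectral_theorem, Unitary.conjStarAlgAut_apply]
    rw [hS, unitary_conj_mul h1, unitary_conj_mul h1]
    have hfe : (fun i => ((|lam i| : ℝ) : ℂ)) * (fun i => ((|lam i| : ℝ) : ℂ))
        = (RCLike.ofReal ∘ lam) * (RCLike.ofReal ∘ lam) := by
      funext i
      simp only [Pi.mul_apply, Function.comp_apply]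
      rw [show (RCLike.ofReal (lam i) : ℂ) = ((lam i : ℝ) : ℂ) from rfl,
        ← Complex.ofReal_mul, ← Complex.ofReal_mul, abs_mul_abs_self]
    rw [hfe]
  have htn : traceNorm (A - B) = ∑ i, |lam i| := by
    rw [traceNorm_eq_of_sq hSpsd hsq, hS, Matrix.trace_mul_cycle, h1,
      Matrix.one_mul, Matrix.trace_diagonal]
    rw [Complex.re_sum]
    simp
  set A' : Matrix n n ℂ := star V * A * V with hA'
  set B' : Matrix n n ℂ := star V * B * V with hB'
  have hA'psd : A'.PosSemidef := by
    have := hA.conjTranspose_mul_mul_same V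
    simpa [hA', Matrix.star_eq_conjTranspose] using this
  have hB'psd : B'.PosSemidef := by
    have := hB.conjTranspose_mul_mul_same V
    simpa [hB', Matrix.star_eq_conjTranspose] using this
  have hdiff : A' - B' = Matrix.diagonal (RCLike.ofReal ∘ lam) := by
    rw [hA', hB', ← Matrix.sub_mul, ← Matrix.mul_sub]
    conv_lhs => rw [hY.spectral_theorem, Unitary.conjStarAlgAut_apply]
    rw [← hV]
    simp only [Matrix.mul_assoc, h1, Matrix.mul_one]
    rw [← Matrix.mul_assoc, h1, Matrix.one_mul]
  have hentry : ∀ i, lam i = (A' i i).re - (B' i i).re := by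
    intro i
    have := congrFun (congrFun hdiff i) i
    have h := congrArg Complex.re this
    simpa [Matrix.sub_apply, Matrix.diagonal_apply_eq] using h.symm
  have htrA : A'.trace = A.trace := by
    rw [hA', Matrix.trace_mul_cycle, h2, Matrix.one_mul]
  have htrB : B'.trace = B.trace := by
    rw [hB', Matrix.trace_mul_cycle, h2, Matrix.one_mul]
  rw [htn, ← htrA, ← htrB, Matrix.trace, Matrix.trace, Complex.re_sum, Complex.re_sum,
    ← Finset.sum_add_distrib]
  refine Finset.sum_le_sum fun i _ => ?_
  rw [hentry i]
  calc |(A' i i).re - (B' i i).re| ≤ |(A' i i).re| + |(B' i i).re| := abs_sub _ _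
  _ = (A' i i).re + (B' i i).re := by
      rw [abs_of_nonneg (diag_re_nonneg hA'psd i), abs_of_nonneg (diag_re_nonneg hB'psd i)]


section ptrace
variable {e : Type*} [Fintype e] [DecidableEq e]

lemma ptrace1_apply (ρ : Matrix (n × e) (n × e) ℂ) (j j' : e) :
    ptrace1 ρ j j' = ∑ i, ρ (i, j) (i, j') := rfl

lemma trace_ptrace1 (ρ : Matrix (n × e) (n × e) ℂ) : (ptrace1 ρ).trace = ρ.trace := by
  rw [Matrix.trace, Matrix.trace]
  simp only [Matrix.diag_apply, ptrace1_apply]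
  rw [Fintype.sum_prod_type, Finset.sum_comm]

lemma ptrace1_sub (ρ σ : Matrix (n × e) (n × e) ℂ) :
    ptrace1 (ρ - σ) = ptrace1 ρ - ptrace1 σ := by
  ext j j'
  simp [ptrace1_apply, Finset.sum_sub_distrib]

lemma ptrace1_kron (X : Matrix n n ℂ) (σ : Matrix e e ℂ) :
    ptrace1 (X ⊗ₖ σ) = X.trace • σ := by
  ext j j'
  simp [ptrace1_apply, Matrix.kroneckerMap_apply, Matrix.trace, Finset.sum_mul]

lemma ptrace1_mul_comm (A : Matrix n n ℂ) (σ : Matrix (n × e) (n × e) ℂ) :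
    ptrace1 ((A ⊗ₖ (1 : Matrix e e ℂ)) * σ) = ptrace1 (σ * (A ⊗ₖ (1 : Matrix e e ℂ))) := by
  ext j j'
  simp only [ptrace1_apply, Matrix.mul_apply, Matrix.kroneckerMap_apply, Matrix.one_apply,
    Fintype.sum_prod_type, mul_ite, mul_zero, mul_one, ite_mul, zero_mul,
    Finset.sum_ite_eq, Finset.sum_ite_eq', Finset.mem_univ, if_true]
  rw [Finset.sum_comm]
  exact Finset.sum_congr rfl fun i _ => Finset.sum_congr rfl fun k _ => mul_comm _ _

lemma ptrace1_conjTranspose (ρ : Matrix (n × e) (n × e) ℂ) :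
    (ptrace1 ρ)ᴴ = ptrace1 ρᴴ := by
  ext j j'
  simp [ptrace1_apply, Matrix.conjTranspose_apply, map_sum]

lemma ptrace1_posSemidef {ρ : Matrix (n × e) (n × e) ℂ} (hρ : ρ.PosSemidef) :
    (ptrace1 ρ).PosSemidef := by
  refine Matrix.PosSemidef.of_dotProduct_mulVec_nonneg ?_ ?_
  · exact (ptrace1_conjTranspose ρ).trans (congrArg ptrace1 hρ.1.eq)
  · intro x
    set y : n → (n × e) → ℂ := fun i kl => if kl.1 = i then x kl.2 else 0 with hy
    have hterm : ∀ i, dotProduct (star (y i)) (ρ *ᵥ y i)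
        = ∑ j, ∑ j', star (x j) * ρ (i, j) (i, j') * x j' := by
      intro i
      simp only [dotProduct, Matrix.mulVec, Pi.star_apply, hy, Fintype.sum_prod_type]
      simp only [apply_ite (star : ℂ → ℂ), star_zero, ite_mul, zero_mul, mul_ite, mul_zero,
        Finset.sum_ite_eq', Finset.mem_univ, if_true]
      rw [Finset.sum_eq_single i (fun b _ hb => by simp [hb]) (fun h => absurd (Finset.mem_univ i) h)]
      simp only [eq_self_iff_true, if_true]
      refine Finset.sum_congr rfl fun j _ => ?_
      rw [Finset.sum_eq_single i (fun b _ hb => by simp [hb]) (fun h => absurd (Finset.mem_univ i) h)]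
      simp only [eq_self_iff_true, if_true, Finset.mul_sum]
      exact Finset.sum_congr rfl fun j' _ => by ring
    have key : dotProduct (star x) (ptrace1 ρ *ᵥ x)
        = ∑ i, dotProduct (star (y i)) (ρ *ᵥ y i) := by
      simp only [hterm]
      simp only [dotProduct, Matrix.mulVec, Pi.star_apply, ptrace1_apply, Matrix.of_apply,
        Finset.mul_sum, Finset.sum_mul]
      calc (∑ j : e, ∑ j' : e, ∑ i : n, star (x j) * (ρ (i, j) (i, j') * x j'))
          = ∑ j : e, ∑ i : n, ∑ j' : e, star (x j) * (ρ (i, j) (i, j') * x j') :=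
            Finset.sum_congr rfl fun j _ => Finset.sum_comm
        _ = ∑ i : n, ∑ j : e, ∑ j' : e, star (x j) * (ρ (i, j) (i, j') * x j') :=
            Finset.sum_comm
        _ = ∑ i : n, ∑ j : e, ∑ j' : e, star (x j) * ρ (i, j) (i, j') * x j' := by
            refine Finset.sum_congr rfl fun i _ => Finset.sum_congr rfl fun j _ =>
              Finset.sum_congr rfl fun j' _ => by ring
    rw [key]
    exact Finset.sum_nonneg fun i _ => hρ.dotProduct_mulVec_nonneg _

end ptrace
section kron
variable {e : Type*} [Fintype e] [DecidableEq e]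

lemma kron_conjTranspose (A : Matrix n n ℂ) (B : Matrix e e ℂ) :
    (A ⊗ₖ B)ᴴ = Aᴴ ⊗ₖ Bᴴ := by
  ext ⟨i, j⟩ ⟨k, l⟩
  simp [Matrix.conjTranspose_apply, Matrix.kroneckerMap_apply, mul_comm]

lemma kron_posSemidef {A : Matrix n n ℂ} {B : Matrix e e ℂ}
    (hA : A.PosSemidef) (hB : B.PosSemidef) : (A ⊗ₖ B).PosSemidef := by
  exact hA.kronecker hB

lemma sub_kron (A B : Matrix n n ℂ) :
    (A - B) ⊗ₖ (1 : Matrix e e ℂ) = A ⊗ₖ 1 - B ⊗ₖ 1 := by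
  ext ⟨i, j⟩ ⟨k, l⟩
  simp [Matrix.kroneckerMap_apply, sub_mul]

open scoped MatrixOrder in
lemma ptrace1_kron_mul_posSemidef {A : Matrix n n ℂ} (hA : A.PosSemidef)
    {ρ : Matrix (n × e) (n × e) ℂ} (hρ : ρ.PosSemidef) :
    (ptrace1 ((A ⊗ₖ (1 : Matrix e e ℂ)) * ρ)).PosSemidef := by
  set S := CFC.sqrt A with hSdef
  have hSH : Sᴴ = S := (Matrix.nonneg_iff_posSemidef.mp (CFC.sqrt_nonneg A)).1.eq
  have hfact : (A ⊗ₖ (1 : Matrix e e ℂ)) * ρ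
      = (S ⊗ₖ (1 : Matrix e e ℂ)) * ((S ⊗ₖ (1 : Matrix e e ℂ)) * ρ) := by
    conv_rhs => rw [← Matrix.mul_assoc, ← Matrix.mul_kronecker_mul, CFC.sqrt_mul_sqrt_self A hA.nonneg,
      Matrix.one_mul]
  rw [hfact, ptrace1_mul_comm]
  have heq : (S ⊗ₖ (1 : Matrix e e ℂ)) * ρ * (S ⊗ₖ (1 : Matrix e e ℂ))
      = (S ⊗ₖ (1 : Matrix e e ℂ))ᴴ * ρ * (S ⊗ₖ (1 : Matrix e e ℂ)) := by
    rw [kron_conjTranspose, hSH, Matrix.conjTranspose_one]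
  rw [heq]
  exact ptrace1_posSemidef (hρ.conjTranspose_mul_mul_same _)

lemma traceNorm_ptrace1_le {A B : Matrix n n ℂ} (hA : A.PosSemidef) (hB : B.PosSemidef)
    {ρ : Matrix (n × e) (n × e) ℂ} (hρ : ρ.PosSemidef) :
    traceNorm (ptrace1 (((A - B) ⊗ₖ (1 : Matrix e e ℂ)) * ρ))
      ≤ ((A ⊗ₖ (1 : Matrix e e ℂ)) * ρ).trace.re + ((B ⊗ₖ (1 : Matrix e e ℂ)) * ρ).trace.re := by
  rw [sub_kron, Matrix.sub_mul, ptrace1_sub]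
  calc traceNorm (ptrace1 ((A ⊗ₖ 1) * ρ) - ptrace1 ((B ⊗ₖ 1) * ρ))
      ≤ (ptrace1 ((A ⊗ₖ 1) * ρ)).trace.re + (ptrace1 ((B ⊗ₖ 1) * ρ)).trace.re :=
        traceNorm_sub_le (ptrace1_kron_mul_posSemidef hA hρ) (ptrace1_kron_mul_posSemidef hB hρ)
  _ = _ := by rw [trace_ptrace1, trace_ptrace1]

lemma ptrace1_kron_prod (C P : Matrix n n ℂ) (σ : Matrix e e ℂ) :
    ptrace1 ((C ⊗ₖ (1 : Matrix e e ℂ)) * (P ⊗ₖ σ)) = (C * P).trace • σ := by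
  rw [← Matrix.mul_kronecker_mul, Matrix.one_mul, ptrace1_kron]

end kron

end Aux


section Helpers

lemma sum_kron_one {d o : ℕ} (C : Fin o → Matrix (Fin d) (Fin d) ℂ) :
    (∑ a, C a) ⊗ₖ (1 : Matrix (Fin d) (Fin d) ℂ)
      = ∑ a, C a ⊗ₖ (1 : Matrix (Fin d) (Fin d) ℂ) := by
  ext ⟨i, j⟩ ⟨k, l⟩
  simp [Matrix.kroneckerMap_apply, Matrix.sum_apply, Finset.sum_mul]

lemma sum_retr {d o : ℕ} (C : Fin o → Matrix (Fin d) (Fin d) ℂ)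
    (ρ : Matrix (Fin d × Fin d) (Fin d × Fin d) ℂ) :
    ∑ a, ((C a ⊗ₖ (1 : Matrix (Fin d) (Fin d) ℂ)) * ρ).trace.re
      = (((∑ a, C a) ⊗ₖ (1 : Matrix (Fin d) (Fin d) ℂ)) * ρ).trace.re := by
  rw [sum_kron_one, Finset.sum_mul, Matrix.trace_sum, Complex.re_sum]

lemma retr_smul_one {d : ℕ} (r : ℝ) (ρ : Matrix (Fin d × Fin d) (Fin d × Fin d) ℂ)
    (hρ : ρ.trace = 1) :
    ((((r : ℂ) • (1 : Matrix (Fin d) (Fin d) ℂ)) ⊗ₖ (1 : Matrix (Fin d) (Fin d) ℂ))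
      * ρ).trace.re = r := by
  rw [Matrix.smul_kronecker, Matrix.one_kronecker_one, Matrix.smul_mul, Matrix.one_mul,
    Matrix.trace_smul, hρ]
  simp

open scoped MatrixOrder in
lemma lower_per_x {d : ℕ} (hd : 0 < d) (Mx Fx : Fin d → Matrix (Fin d) (Fin d) ℂ)
    (hMpsd : ∀ a, (Mx a).PosSemidef)
    (hMidem : ∀ a, Mx a * Mx a = Mx a)
    (hMtr : ∀ a, (Mx a).trace = 1)
    (hMdiag : ∀ a i, Mx a i i = (((d : ℝ)⁻¹ : ℝ) : ℂ))
    (hMsum : ∑ a, Mx a = 1)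
    (hFpsd : ∀ a, (Fx a).PosSemidef)
    (hFsum : ∑ a, Fx a = 1)
    (hFdiag : ∀ a, (Fx a).IsDiag) :
    ∃ ρ : Matrix (Fin d × Fin d) (Fin d × Fin d) ℂ, IsDensityMatrix ρ ∧
      2 - 2 * (d : ℝ)⁻¹ ≤ ∑ a, traceNorm (ptrace1
        (((Mx a - Fx a) ⊗ₖ (1 : Matrix (Fin d) (Fin d) ℂ)) * ρ)) := by
  haveI : NeZero d := ⟨hd.ne'⟩
  set i0 : Fin d := ⟨0, hd⟩
  set σ0 : Matrix (Fin d) (Fin d) ℂ := Matrix.diagonal (fun j => if j = i0 then 1 else 0)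
    with hσ0
  have hσ0psd : σ0.PosSemidef := by
    refine Matrix.posSemidef_diagonal_iff.mpr fun i => ?_
    split
    · exact zero_le_one
    · exact le_refl 0
  have hσ0tr : σ0.trace = 1 := by
    rw [hσ0, Matrix.trace_diagonal]
    simp [Finset.sum_ite_eq']
  set t : Fin d → ℝ := fun a => ((Fx a * Mx a).trace).re with ht
  have htnonneg : ∀ a, 0 ≤ t a := by
    intro a
    obtain ⟨C, hC⟩ : ∃ C : Matrix (Fin d) (Fin d) ℂ, Fx a = Cᴴ * C :=
      ⟨CFC.sqrt (Fx a), by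
        rw [(Matrix.nonneg_iff_posSemidef.mp (CFC.sqrt_nonneg (Fx a))).1.eq,
          CFC.sqrt_mul_sqrt_self _ (hFpsd a).nonneg]⟩
    have h1 : (Fx a * Mx a).trace = (C * Mx a * Cᴴ).trace := by
      rw [Matrix.trace_mul_cycle, hC, Matrix.mul_assoc]
    rw [ht]
    dsimp only
    rw [h1]
    exact re_trace_nonneg ((hMpsd a).mul_mul_conjTranspose_same C)
  have htr1 : ∀ a, (Fx a * Mx a).trace = (∑ j, Fx a j j) * (((d : ℝ)⁻¹ : ℝ) : ℂ) := by
    intro a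
    rw [Matrix.trace]
    rw [Finset.sum_mul]
    refine Finset.sum_congr rfl fun j _ => ?_
    rw [Matrix.diag_apply, Matrix.mul_apply]
    rw [Finset.sum_eq_single j (fun k _ hk => by rw [(hFdiag a) (Ne.symm hk), zero_mul])
      (fun h => absurd (Finset.mem_univ j) h)]
    rw [hMdiag a j]
  have htsum : ∑ a, t a = 1 := by
    have : ∑ a, (Fx a * Mx a).trace = 1 := by
      have h2 : ∑ a, (∑ j, Fx a j j) = (d : ℂ) := by
        rw [Finset.sum_comm]
        have h3 : ∀ j : Fin d, ∑ a, Fx a j j = 1 := by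
          intro j
          have h4 := congrFun (congrFun hFsum j) j
          rw [Matrix.sum_apply] at h4
          rw [h4, Matrix.one_apply_eq]
        rw [Finset.sum_congr rfl fun j _ => h3 j, Finset.sum_const, Finset.card_univ,
          Fintype.card_fin, nsmul_eq_mul, mul_one]
      simp only [htr1]
      rw [← Finset.sum_mul, h2]
      rw [show (((d : ℝ)⁻¹ : ℝ) : ℂ) = ((d : ℂ))⁻¹ by push_cast; ring]
      exact mul_inv_cancel₀ (Nat.cast_ne_zero.mpr hd.ne')
    rw [ht, ← Complex.re_sum, this]
    simp
  have hsum_le : ∑ a : Fin d, t a ≤ ∑ _a : Fin d, (d : ℝ)⁻¹ := by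
    rw [htsum, Finset.sum_const, Finset.card_univ, Fintype.card_fin, nsmul_eq_mul,
      mul_inv_cancel₀ (by positivity : (d : ℝ) ≠ 0)]
  obtain ⟨a0, -, ha0⟩ := Finset.exists_le_of_sum_le Finset.univ_nonempty hsum_le
  refine ⟨Mx a0 ⊗ₖ σ0, ⟨kron_posSemidef (hMpsd a0) hσ0psd, by
    rw [Matrix.trace_kronecker, hMtr a0, hσ0tr, one_mul]⟩, ?_⟩
  have hptr : ∀ a, ptrace1 (((Mx a - Fx a) ⊗ₖ (1 : Matrix (Fin d) (Fin d) ℂ)) * (Mx a0 ⊗ₖ σ0))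
      = ((Mx a - Fx a) * Mx a0).trace • σ0 := fun a => ptrace1_kron_prod _ _ _
  set c : Fin d → ℂ := fun a => ((Mx a - Fx a) * Mx a0).trace with hc
  have hcreal : ∀ a, c a = ((c a).re : ℂ) := by
    intro a
    have hherm1 : (Mx a - Fx a).IsHermitian := (hMpsd a).1.sub (hFpsd a).1
    have : star (c a) = c a := by
      rw [hc]
      dsimp only
      rw [← Matrix.trace_conjTranspose, Matrix.conjTranspose_mul, hherm1.eq, (hMpsd a0).1.eq,
        Matrix.trace_mul_comm]
    have him : (c a).im = 0 := by
      have := congrArg Complex.im this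
      simp only [Complex.star_def, Complex.conj_im] at this
      linarith
    have h2 := Complex.re_add_im (c a)
    rw [him] at h2
    simpa using h2.symm
  set rc : Fin d → ℝ := fun a => (c a).re with hrc
  have hval : ∀ a, traceNorm (ptrace1 (((Mx a - Fx a) ⊗ₖ (1 : Matrix (Fin d) (Fin d) ℂ))
      * (Mx a0 ⊗ₖ σ0))) = |rc a| := by
    intro a
    rw [hptr a, show ((Mx a - Fx a) * Mx a0).trace = ((rc a : ℝ) : ℂ) from hcreal a,
      traceNorm_real_smul hσ0psd]
    rw [hσ0tr]
    simp
  have hsumc : ∑ a, rc a = 0 := by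
    have : ∑ a, c a = 0 := by
      simp only [hc]
      rw [← Matrix.trace_sum, ← Finset.sum_mul, Finset.sum_sub_distrib, hMsum, hFsum, sub_self,
        Matrix.zero_mul, Matrix.trace_zero]
    rw [hrc]
    rw [← Complex.re_sum, this]
    simp
  have hrca0 : rc a0 = 1 - t a0 := by
    rw [hrc, hc]
    dsimp only
    rw [Matrix.sub_mul, Matrix.trace_sub, hMidem a0, hMtr a0]
    simp [ht, Complex.sub_re]
  calc (2 : ℝ) - 2 * (d : ℝ)⁻¹ ≤ 2 * rc a0 := by
        rw [hrca0]
        linarith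
  _ ≤ |rc a0| + |rc a0| := by
        have := le_abs_self (rc a0)
        linarith
  _ = |rc a0| + |∑ a ∈ Finset.univ.erase a0, rc a| := by
        rw [Finset.sum_erase_eq_sub (Finset.mem_univ a0), hsumc]
        rw [zero_sub, abs_neg]
  _ ≤ |rc a0| + ∑ a ∈ Finset.univ.erase a0, |rc a| :=
        add_le_add (le_refl _) (Finset.abs_sum_le_sum_abs _ _)
  _ = ∑ a, |rc a| := Finset.add_sum_erase _ (fun a => |rc a|) (Finset.mem_univ a0)
  _ = ∑ a, traceNorm (ptrace1 (((Mx a - Fx a) ⊗ₖ (1 : Matrix (Fin d) (Fin d) ℂ))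
        * (Mx a0 ⊗ₖ σ0))) := by
        exact (Finset.sum_congr rfl fun a _ => (hval a).symm)

end Helpers


/-- The coherence of any rank-1 projective measurement assemblage mutually unbiased to the
computational (incoherent) basis equals `1 - 1/d`, for any weighting. -/
theorem coherence_mutually_unbiased_rank_one_projective {d m : ℕ} (hd : 0 < d)
    (M : Fin m → Fin d → Matrix (Fin d) (Fin d) ℂ)
    (hM : IsAssemblage M) (hproj : IsRankOneProjective M)
    (hMUBdiag : ∀ x a i, M x a i i = (1 / (d : ℝ) : ℂ))
    (p : Fin m → ℝ) (hp : IsWeighting p) :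
    Coherence p M = 1 - 1 / (d : ℝ) := by
  obtain ⟨hMpsd, hMsum⟩ := hM
  haveI : NeZero d := ⟨hd.ne'⟩
  have hdR : (0 : ℝ) < (d : ℝ) := by exact_mod_cast hd
  have hd1 : (1 : ℝ) ≤ (d : ℝ) := by exact_mod_cast hd
  have hcR0 : (0 : ℝ) < (d : ℝ)⁻¹ := by positivity
  have hcR1 : (d : ℝ)⁻¹ ≤ 1 := by
    rw [inv_le_one_iff₀]
    right
    exact hd1
  have hMdiag' : ∀ x a i, M x a i i = (((d : ℝ)⁻¹ : ℝ) : ℂ) := by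
    intro x a i
    rw [hMUBdiag x a i]
    push_cast
    ring
  -- the canonical density matrix, for nonemptiness
  set τ0 : Matrix (Fin d × Fin d) (Fin d × Fin d) ℂ :=
    Matrix.diagonal (fun k => if k = (⟨0, hd⟩, ⟨0, hd⟩) then 1 else 0) with hτ0
  have hτ0dm : IsDensityMatrix τ0 := by
    constructor
    · refine Matrix.posSemidef_diagonal_iff.mpr fun i => ?_
      split
      · exact zero_le_one
      · exact le_refl 0
    · rw [hτ0, Matrix.trace_diagonal, Finset.sum_ite_eq']
      simp
  haveI hne : Nonempty {ρ : Matrix (Fin d × Fin d) (Fin d × Fin d) ℂ // IsDensityMatrix ρ} :=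
    ⟨⟨τ0, hτ0dm⟩⟩
  -- the incoherent reference assemblage
  set F0 : Fin m → Fin d → Matrix (Fin d) (Fin d) ℂ :=
    fun _ _ => (((d : ℝ)⁻¹ : ℝ) : ℂ) • 1 with hF0
  have hF0psd : ∀ x a, (F0 x a).PosSemidef := fun x a =>
    psd_smul Matrix.PosSemidef.one hcR0.le
  have hF0sum : ∀ x, ∑ a, F0 x a = 1 := by
    intro x
    rw [hF0]
    rw [Finset.sum_const, Finset.card_univ, Fintype.card_fin, ← Nat.cast_smul_eq_nsmul ℂ,
      smul_smul, show ((d : ℕ) : ℂ) * (((d : ℝ)⁻¹ : ℝ) : ℂ) = 1 by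
        push_cast
        field_simp, one_smul]
  have hF0asm : IsAssemblage F0 := ⟨hF0psd, hF0sum⟩
  have hF0inc : IsIncoherent F0 := by
    intro x a i j hij
    rw [hF0]
    simp [Matrix.one_apply_ne hij]
  -- PSD of 1 - M x a
  have hMone_sub : ∀ x a, ((1 : Matrix (Fin d) (Fin d) ℂ) - M x a).PosSemidef := by
    intro x a
    have hHerm : ((1 : Matrix (Fin d) (Fin d) ℂ) - M x a)ᴴ = 1 - M x a := by
      rw [Matrix.conjTranspose_sub, Matrix.conjTranspose_one, (hproj x a).1.eq]
    have hidem : ((1 : Matrix (Fin d) (Fin d) ℂ) - M x a) * (1 - M x a) = 1 - M x a := by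
      rw [Matrix.sub_mul, Matrix.one_mul, Matrix.mul_sub, Matrix.mul_one, (hproj x a).2.1]
      abel
    have heq : (1 : Matrix (Fin d) (Fin d) ℂ) - M x a
        = ((1 : Matrix (Fin d) (Fin d) ℂ) - M x a)ᴴ * (1 - M x a) := by
      rw [hHerm, hidem]
    rw [heq]
    exact Matrix.posSemidef_conjTranspose_mul_self _
  -- uniform boundedness of the objective
  have hbound2 : ∀ (F : Fin m → Fin d → Matrix (Fin d) (Fin d) ℂ), IsAssemblage F →
      ∀ (x : Fin m) (ρ : {ρ : Matrix (Fin d × Fin d) (Fin d × Fin d) ℂ // IsDensityMatrix ρ}),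
      ∑ a, traceNorm (ptrace1 (((M x a - F x a) ⊗ₖ (1 : Matrix (Fin d) (Fin d) ℂ)) * ρ.1))
        ≤ 2 := by
    intro F hF x ρ
    have h1 := Finset.sum_le_sum (s := Finset.univ)
      (fun a (_ : a ∈ Finset.univ) => traceNorm_ptrace1_le (hMpsd x a) (hF.1 x a) ρ.2.1)
    refine h1.trans ?_
    rw [Finset.sum_add_distrib, sum_retr, sum_retr, hMsum x, hF.2 x]
    have h2 : (((1 : Matrix (Fin d) (Fin d) ℂ)) ⊗ₖ (1 : Matrix (Fin d) (Fin d) ℂ)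
        * ρ.1).trace.re = 1 := by
      have h3 := retr_smul_one (d := d) 1 ρ.1 ρ.2.2
      simpa using h3
    rw [h2]
    norm_num
  -- lower bound for all incoherent assemblages
  have hlow : ∀ (F : Fin m → Fin d → Matrix (Fin d) (Fin d) ℂ), IsAssemblage F →
      IsIncoherent F → 1 - 1 / (d : ℝ) ≤ Ddiamond p M F := by
    intro F hF hFinc
    have hsup : ∀ x : Fin m, 2 - 2 * (d : ℝ)⁻¹ ≤
        ⨆ ρ : {ρ : Matrix (Fin d × Fin d) (Fin d × Fin d) ℂ // IsDensityMatrix ρ},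
          ∑ a, traceNorm (ptrace1
            (((M x a - F x a) ⊗ₖ (1 : Matrix (Fin d) (Fin d) ℂ)) * ρ.1)) := by
      intro x
      obtain ⟨ρ0, hρ0, hge⟩ := lower_per_x hd (M x) (F x) (fun a => hMpsd x a)
        (fun a => (hproj x a).2.1) (fun a => (hproj x a).2.2) (fun a i => hMdiag' x a i)
        (hMsum x) (fun a => hF.1 x a) (hF.2 x) (fun a => hFinc x a)
      have hbdd : BddAbove (Set.range (fun ρ :
          {ρ : Matrix (Fin d × Fin d) (Fin d × Fin d) ℂ // IsDensityMatrix ρ} =>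
          ∑ a, traceNorm (ptrace1
            (((M x a - F x a) ⊗ₖ (1 : Matrix (Fin d) (Fin d) ℂ)) * ρ.1)))) := by
        refine ⟨2, ?_⟩
        rintro v ⟨ρ, rfl⟩
        exact hbound2 F hF x ρ
      exact hge.trans (le_ciSup hbdd ⟨ρ0, hρ0⟩)
    unfold Ddiamond
    have h5 : ∑ x, p x * (2 - 2 * (d : ℝ)⁻¹) ≤ ∑ x, p x *
        ⨆ ρ : {ρ : Matrix (Fin d × Fin d) (Fin d × Fin d) ℂ // IsDensityMatrix ρ},
          ∑ a, traceNorm (ptrace1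
            (((M x a - F x a) ⊗ₖ (1 : Matrix (Fin d) (Fin d) ℂ)) * ρ.1)) :=
      Finset.sum_le_sum fun x _ => mul_le_mul_of_nonneg_left (hsup x) (hp.1 x).le
    rw [← Finset.sum_mul, hp.2, one_mul] at h5
    refine le_trans (le_of_eq ?_) (mul_le_mul_of_nonneg_left h5 (by norm_num : (0:ℝ) ≤ 1/2))
    rw [one_div]
    ring
  -- upper bound for F0
  have hupp : Ddiamond p M F0 ≤ 1 - 1 / (d : ℝ) := by
    have hsup : ∀ x : Fin m,
        (⨆ ρ : {ρ : Matrix (Fin d × Fin d) (Fin d × Fin d) ℂ // IsDensityMatrix ρ},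
          ∑ a, traceNorm (ptrace1
            (((M x a - F0 x a) ⊗ₖ (1 : Matrix (Fin d) (Fin d) ℂ)) * ρ.1)))
          ≤ 2 - 2 * (d : ℝ)⁻¹ := by
      intro x
      refine ciSup_le fun ρ => ?_
      have hdecomp : ∀ a, M x a - F0 x a
          = (((1 - (d : ℝ)⁻¹ : ℝ) : ℂ) • M x a)
            - ((((d : ℝ)⁻¹ : ℝ) : ℂ) • ((1 : Matrix (Fin d) (Fin d) ℂ) - M x a)) := by
        intro a
        rw [hF0]
        push_cast
        rw [sub_smul, one_smul, smul_sub]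
        abel
      have h1 : ∀ a, traceNorm (ptrace1
            (((M x a - F0 x a) ⊗ₖ (1 : Matrix (Fin d) (Fin d) ℂ)) * ρ.1))
          ≤ (((((1 - (d : ℝ)⁻¹ : ℝ) : ℂ) • M x a) ⊗ₖ (1 : Matrix (Fin d) (Fin d) ℂ))
              * ρ.1).trace.re
            + ((((((d : ℝ)⁻¹ : ℝ) : ℂ) • ((1 : Matrix (Fin d) (Fin d) ℂ) - M x a))
              ⊗ₖ (1 : Matrix (Fin d) (Fin d) ℂ)) * ρ.1).trace.re := by
        intro a
        rw [hdecomp a]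
        exact traceNorm_ptrace1_le (psd_smul (hMpsd x a) (by linarith))
          (psd_smul (hMone_sub x a) hcR0.le) ρ.2.1
      refine (Finset.sum_le_sum (fun a (_ : a ∈ Finset.univ) => h1 a)).trans ?_
      rw [Finset.sum_add_distrib, sum_retr, sum_retr]
      have hA : (∑ a, (((1 - (d : ℝ)⁻¹ : ℝ) : ℂ) • M x a))
          = ((1 - (d : ℝ)⁻¹ : ℝ) : ℂ) • (1 : Matrix (Fin d) (Fin d) ℂ) := by
        rw [← Finset.smul_sum, hMsum]
      have hdinv : ((((d : ℝ)⁻¹ : ℝ)) : ℂ) * ((d : ℕ) : ℂ) = 1 := by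
        push_cast
        field_simp
      have hB : (∑ a, ((((d : ℝ)⁻¹ : ℝ) : ℂ) • ((1 : Matrix (Fin d) (Fin d) ℂ) - M x a)))
          = ((1 - (d : ℝ)⁻¹ : ℝ) : ℂ) • (1 : Matrix (Fin d) (Fin d) ℂ) := by
        rw [← Finset.smul_sum, Finset.sum_sub_distrib, hMsum, Finset.sum_const,
          Finset.card_univ, Fintype.card_fin, ← Nat.cast_smul_eq_nsmul ℂ, smul_sub,
          smul_smul, hdinv, one_smul]
        push_cast
        rw [sub_smul, one_smul]
      rw [hA, hB, retr_smul_one _ ρ.1 ρ.2.2]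
      linarith
    unfold Ddiamond
    have h5 : ∑ x, p x *
        (⨆ ρ : {ρ : Matrix (Fin d × Fin d) (Fin d × Fin d) ℂ // IsDensityMatrix ρ},
          ∑ a, traceNorm (ptrace1
            (((M x a - F0 x a) ⊗ₖ (1 : Matrix (Fin d) (Fin d) ℂ)) * ρ.1)))
        ≤ ∑ x, p x * (2 - 2 * (d : ℝ)⁻¹) :=
      Finset.sum_le_sum fun x _ => mul_le_mul_of_nonneg_left (hsup x) (hp.1 x).le
    rw [← Finset.sum_mul, hp.2, one_mul] at h5
    refine le_trans (mul_le_mul_of_nonneg_left h5 (by norm_num : (0:ℝ) ≤ 1/2)) (le_of_eq ?_)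
    rw [one_div]
    ring
  haveI : Nonempty {F : Fin m → Fin d → Matrix (Fin d) (Fin d) ℂ //
      IsAssemblage F ∧ IsIncoherent F} := ⟨⟨F0, hF0asm, hF0inc⟩⟩
  have hbb : BddBelow (Set.range (fun F : {F : Fin m → Fin d → Matrix (Fin d) (Fin d) ℂ //
      IsAssemblage F ∧ IsIncoherent F} => Ddiamond p M F.1)) := by
    refine ⟨1 - 1 / (d : ℝ), ?_⟩
    rintro v ⟨F, rfl⟩
    exact hlow F.1 F.2.1 F.2.2
  unfold Coherence
  refine le_antisymm ?_ (le_ciInf fun F => hlow F.1 F.2.1 F.2.2)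
  exact le_trans (ciInf_le hbb ⟨F0, hF0asm, hF0inc⟩) hupp

end
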